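/- Corollary 2 (quality guarantee of the minimum-entropy sub-tree). In the setting of Theorem 2, suppose q_S (over ℛ_S ⊆ ℛ) satisfies H(q_S) ≤ H(q_T) for a given ℛ_T ⊆ ℛ with distribution q_T. Then ℒ_{q_T} ≤ ℒ_{q_S} + D(q_S‖q̄_S), where q̄_S is the normalized product over ℛ\ℛ_S; in particular no other sub-collection's lower bound can exceed that of q_S by more than D(q_S‖q̄_S). -/

import Mathlib

open Finset Real

private lemma gibbs_ineq {X : Type*} [Fintype X] (p q : X → ℝ)
    (hp : ∀ x, 0 < p x) (hq : ∀ x, 0 < q x)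
    (hsum : ∑ x, p x = ∑ x, q x) :
    ∑ x, p x * Real.log (q x) ≤ ∑ x, p x * Real.log (p x) := by
  have h : ∀ x ∈ Finset.univ (α := X),
      p x * Real.log (q x) - p x * Real.log (p x) ≤ q x - p x := by
    intro x _
    have h1 : p x * Real.log (q x) - p x * Real.log (p x)
        = p x * Real.log (q x / p x) := by
      rw [Real.log_div (hq x).ne' (hp x).ne']; ring
    rw [h1]
    have h2 : Real.log (q x / p x) ≤ q x / p x - 1 :=
      Real.log_le_sub_one_of_pos (div_pos (hq x) (hp x))
    calc p x * Real.log (q x / p x) ≤ p x * (q x / p x - 1) :=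
          mul_le_mul_of_nonneg_left h2 (hp x).le
      _ = q x - p x := by rw [mul_sub, mul_div_cancel₀ _ (hp x).ne', mul_one]
  have h2 := Finset.sum_le_sum h
  rw [Finset.sum_sub_distrib, Finset.sum_sub_distrib] at h2
  linarith

/-- Corollary 2: if `q_S` has minimum entropy (`H(q_S) ≤ H(q_T)`),
then `ℒ_{q_T} ≤ ℒ_{q_S} + D(q_S‖q̄_S)`. -/
theorem corollary2_quality_guarantee {X : Type*} [Fintype X] [Nonempty X]
    {R : Type*} [Fintype R] [DecidableEq R] (α : R → X → ℝ) (hα : ∀ r x, 0 < α r x)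
    (S T : Finset R) (ZS ZT ZSbar : ℝ) (qS qT qSbar : X → ℝ)
    (hZS : ZS = ∑ x, ∏ r ∈ S, α r x)
    (hZT : ZT = ∑ x, ∏ r ∈ T, α r x)
    (hZSbar : ZSbar = ∑ x, ∏ r ∈ Sᶜ, α r x)
    (hqS : ∀ x, qS x = (∏ r ∈ S, α r x) / ZS)
    (hqT : ∀ x, qT x = (∏ r ∈ T, α r x) / ZT)
    (hqSbar : ∀ x, qSbar x = (∏ r ∈ Sᶜ, α r x) / ZSbar)
    (hH : (-∑ x, qS x * Real.log (qS x)) ≤ -∑ x, qT x * Real.log (qT x)) :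
    Real.log ZT + ∑ r ∈ Tᶜ, ∑ x, qT x * Real.log (α r x)
      ≤ (Real.log ZS + ∑ r ∈ Sᶜ, ∑ x, qS x * Real.log (α r x))
        + ∑ x, qS x * Real.log (qS x / qSbar x) := by
  have hpS : ∀ x, 0 < ∏ r ∈ S, α r x := fun x => Finset.prod_pos fun r _ => hα r x
  have hpSb : ∀ x, 0 < ∏ r ∈ Sᶜ, α r x := fun x => Finset.prod_pos fun r _ => hα r x
  have hpT : ∀ x, 0 < ∏ r ∈ T, α r x := fun x => Finset.prod_pos fun r _ => hα r x
  have hZS0 : 0 < ZS := hZS ▸ Finset.sum_pos (fun x _ => hpS x) univ_nonempty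
  have hZT0 : 0 < ZT := hZT ▸ Finset.sum_pos (fun x _ => hpT x) univ_nonempty
  have hZSb0 : 0 < ZSbar := hZSbar ▸ Finset.sum_pos (fun x _ => hpSb x) univ_nonempty
  have hqS0 : ∀ x, 0 < qS x := fun x => (hqS x) ▸ div_pos (hpS x) hZS0
  have hqT0 : ∀ x, 0 < qT x := fun x => (hqT x) ▸ div_pos (hpT x) hZT0
  have hqSb0 : ∀ x, 0 < qSbar x := fun x => (hqSbar x) ▸ div_pos (hpSb x) hZSb0
  have hsS : ∑ x, qS x = 1 := by
    simp only [hqS]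
    rw [← Finset.sum_div, ← hZS, div_self hZS0.ne']
  have hsT : ∑ x, qT x = 1 := by
    simp only [hqT]
    rw [← Finset.sum_div, ← hZT, div_self hZT0.ne']
  -- log of partial products in terms of q's
  have lS : ∀ x, Real.log (∏ r ∈ S, α r x) = Real.log (qS x) + Real.log ZS := by
    intro x
    rw [hqS, Real.log_div (hpS x).ne' hZS0.ne']; ring
  have lT : ∀ x, Real.log (∏ r ∈ T, α r x) = Real.log (qT x) + Real.log ZT := by
    intro x
    rw [hqT, Real.log_div (hpT x).ne' hZT0.ne']; ring
  have lSb : ∀ x, Real.log (∏ r ∈ Sᶜ, α r x) = Real.log (qSbar x) + Real.log ZSbar := by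
    intro x
    rw [hqSbar, Real.log_div (hpSb x).ne' hZSb0.ne']; ring
  -- log of full product
  have key : ∀ x, Real.log (∏ r, α r x)
      = Real.log (qS x) + Real.log ZS + Real.log (qSbar x) + Real.log ZSbar := by
    intro x
    rw [← Finset.prod_mul_prod_compl S (fun r => α r x),
      Real.log_mul (hpS x).ne' (hpSb x).ne', lS, lSb]
    ring
  have keyT : ∀ x, Real.log (∏ r ∈ Tᶜ, α r x)
      = Real.log (qS x) + Real.log ZS + Real.log (qSbar x) + Real.log ZSbar
        - Real.log (qT x) - Real.log ZT := by
    intro x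
    have h := key x
    rw [← Finset.prod_mul_prod_compl T (fun r => α r x),
      Real.log_mul (hpT x).ne' (Finset.prod_pos fun r _ => hα r x).ne', lT] at h
    linarith
  -- swap sums
  have hswapT : ∑ r ∈ Tᶜ, ∑ x, qT x * Real.log (α r x)
      = ∑ x, qT x * Real.log (∏ r ∈ Tᶜ, α r x) := by
    rw [Finset.sum_comm]
    refine Finset.sum_congr rfl fun x _ => ?_
    rw [Real.log_prod (fun r (_ : r ∈ Tᶜ) => (hα r x).ne'), Finset.mul_sum]
  have hswapS : ∑ r ∈ Sᶜ, ∑ x, qS x * Real.log (α r x)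
      = ∑ x, qS x * Real.log (∏ r ∈ Sᶜ, α r x) := by
    rw [Finset.sum_comm]
    refine Finset.sum_congr rfl fun x _ => ?_
    rw [Real.log_prod (fun r (_ : r ∈ Sᶜ) => (hα r x).ne'), Finset.mul_sum]
  -- rewrite LHS
  have eqL : Real.log ZT + ∑ r ∈ Tᶜ, ∑ x, qT x * Real.log (α r x)
      = (∑ x, qT x * Real.log (qS x)) + (∑ x, qT x * Real.log (qSbar x))
        - (∑ x, qT x * Real.log (qT x)) + Real.log ZS + Real.log ZSbar := by
    rw [hswapT]
    have : ∑ x, qT x * Real.log (∏ r ∈ Tᶜ, α r x)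
        = ∑ x, (qT x * Real.log (qS x) + qT x * Real.log (qSbar x)
            - qT x * Real.log (qT x)
            + qT x * (Real.log ZS + Real.log ZSbar - Real.log ZT)) := by
      refine Finset.sum_congr rfl fun x _ => ?_
      rw [keyT x]; ring
    rw [this]
    simp only [Finset.sum_add_distrib, Finset.sum_sub_distrib, ← Finset.sum_mul, hsT]
    ring
  -- rewrite RHS
  have eqR : (Real.log ZS + ∑ r ∈ Sᶜ, ∑ x, qS x * Real.log (α r x))
        + ∑ x, qS x * Real.log (qS x / qSbar x)
      = (∑ x, qS x * Real.log (qS x)) + Real.log ZS + Real.log ZSbar := by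
    rw [hswapS]
    have h1 : ∑ x, qS x * Real.log (∏ r ∈ Sᶜ, α r x)
        = ∑ x, (qS x * Real.log (qSbar x) + qS x * Real.log ZSbar) := by
      refine Finset.sum_congr rfl fun x _ => ?_
      rw [lSb x]; ring
    have h2 : ∑ x, qS x * Real.log (qS x / qSbar x)
        = ∑ x, (qS x * Real.log (qS x) - qS x * Real.log (qSbar x)) := by
      refine Finset.sum_congr rfl fun x _ => ?_
      rw [Real.log_div (hqS0 x).ne' (hqSb0 x).ne']; ring
    rw [h1, h2]
    simp only [Finset.sum_add_distrib, Finset.sum_sub_distrib, ← Finset.sum_mul, hsS]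
    ring
  rw [eqL, eqR]
  have g1 : ∑ x, qT x * Real.log (qS x) ≤ ∑ x, qT x * Real.log (qT x) :=
    gibbs_ineq qT qS hqT0 hqS0 (by rw [hsT, hsS])
  have hsSb : ∑ x, qSbar x = 1 := by
    simp only [hqSbar]
    rw [← Finset.sum_div, ← hZSbar, div_self hZSb0.ne']
  have g2 : ∑ x, qT x * Real.log (qSbar x) ≤ ∑ x, qT x * Real.log (qT x) :=
    gibbs_ineq qT qSbar hqT0 hqSb0 (by rw [hsT, hsSb])
  linarith
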